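/- arXiv:2406.09243 — 2 statements merged into one kernel-verified Lean document; each statement's English description precedes it below -/
import Mathlib

section
/- Let f : ℕ → ℝ be a bounded completely multiplicative function, and suppose that the limit L = lim_{N→∞} 𝔼_{1≤m,n≤N} f(m²+n²) exists. Then the limit lim_{N→∞} 𝔼_{1≤m,n≤N, gcd(m,n)=1} f(m²+n²) exists and equals (π²/6) · ∏_p (1 − f(p)²/p²) · L. -/
set_option maxHeartbeats 1600000
open Filter Finset Real ArithmeticFunction
open scoped ArithmeticFunction.Moebius ArithmeticFunction.zeta
section helpers

lemma EP_aux (g : ℕ → ℝ) (hg1 : g 1 = 1) (hgmul : ∀ m n, g (m * n) = g m * g n)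
    (hgb : ∀ n, |g n| ≤ 1) :
    ∑' d : ℕ, (μ d : ℝ) * g d / (d : ℝ) ^ 2 = ∏' p : Nat.Primes, (1 - g p / (p : ℝ) ^ 2) := by
  set F : ℕ → ℝ := fun n => (μ n : ℝ) * g n / (n : ℝ) ^ 2 with hF
  have hF1 : F 1 = 1 := by simp [hF, hg1]
  have hF0 : F 0 = 0 := by simp [hF]
  have hmul : ∀ {m n : ℕ}, Nat.Coprime m n → F (m * n) = F m * F n := by
    intro m n hmn
    simp only [hF, hgmul m n, isMultiplicative_moebius.map_mul_of_coprime hmn]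
    push_cast
    rw [mul_pow]
    rw [div_mul_div_comm]
    ring_nf
  have hsum : Summable (fun n => ‖F n‖) := by
    refine Summable.of_nonneg_of_le (fun n => norm_nonneg _) ?_
      ((Real.summable_one_div_nat_pow (p := 2)).mpr one_lt_two)
    · intro n
      rcases Nat.eq_zero_or_pos n with rfl | hn
      · simp [hF0]
      · have h1 : |(μ n : ℝ)| ≤ 1 := by
          have := abs_moebius_le_one (n := n)
          exact_mod_cast (by exact_mod_cast this : |(μ n : ℤ)| ≤ 1)
        have h2 : |(μ n : ℝ) * g n| ≤ 1 := by
          rw [abs_mul]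
          calc |(μ n : ℝ)| * |g n| ≤ 1 * 1 := by
                exact mul_le_mul h1 (hgb n) (abs_nonneg _) (by linarith [abs_nonneg (μ n : ℝ)])
            _ = 1 := by ring
        rw [hF]
        simp only [Real.norm_eq_abs, abs_div]
        have hd : |((n : ℝ)) ^ 2| = (n : ℝ) ^ 2 := abs_of_nonneg (by positivity)
        rw [hd, div_le_div_iff₀ (by positivity) (by positivity)]
        nlinarith [abs_nonneg ((μ n : ℝ) * g n)]
  have := EulerProduct.eulerProduct_tprod hF1 hmul hsum hF0
  rw [← this]
  congr 1
  ext p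
  have hp : (p : ℕ).Prime := p.prop
  have hsupp : ∀ e : ℕ, e ∉ ({0, 1} : Finset ℕ) → F ((p : ℕ) ^ e) = 0 := by
    intro e he
    simp only [mem_insert, mem_singleton] at he
    push_neg at he
    have he2 : e ≠ 0 := he.1
    have := moebius_apply_prime_pow (p := p) (k := e) hp he2
    rw [if_neg he.2] at this
    simp [hF, this]
  rw [tsum_eq_sum hsupp]
  rw [Finset.sum_insert (by simp), Finset.sum_singleton]
  simp [hF, hF1, moebius_apply_prime hp, hg1]
  ring

open scoped LSeries.notation in
lemma zeta_aux : ∑' d : ℕ, (μ d : ℝ) / (d : ℝ) ^ 2 = 6 / π ^ 2 := by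
  have hz := LSeries_zeta_mul_Lseries_moebius (s := 2) (by norm_num)
  have hζ : LSeries (↗ζ) 2 = (π : ℂ) ^ 2 / 6 := by
    rw [LSeries_zeta_eq_riemannZeta (by norm_num), riemannZeta_two]
  rw [hζ] at hz
  have hμ : LSeries (↗μ) 2 = 6 / (π : ℂ) ^ 2 := by
    rw [eq_inv_of_mul_eq_one_right hz, inv_div]
  have hterm : ∀ n : ℕ, LSeries.term (↗μ) 2 n = (((μ n : ℝ) / (n : ℝ) ^ 2 : ℝ) : ℂ) := by
    intro n
    rcases Nat.eq_zero_or_pos n with rfl | hn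
    · simp [LSeries.term]
    · rw [LSeries.term_of_ne_zero (by omega)]
      rw [show (2 : ℂ) = ((2 : ℕ) : ℂ) by norm_num, Complex.cpow_natCast]
      push_cast
      ring
  have : LSeries (↗μ) 2 = (((∑' d : ℕ, (μ d : ℝ) / (d : ℝ) ^ 2 : ℝ)) : ℂ) := by
    rw [LSeries, Complex.ofReal_tsum]
    exact tsum_congr hterm
  rw [this] at hμ
  have := hμ
  rw [show ((6 : ℂ) / (π : ℂ) ^ 2) = (((6 / π ^ 2 : ℝ)) : ℂ) by push_cast; ring] at this
  exact_mod_cast this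

lemma div_floor_tendsto (k : ℕ) (hk : 1 ≤ k) :
    Tendsto (fun N : ℕ => ((N / k : ℕ) : ℝ) / (N : ℝ)) atTop (nhds (1 / (k : ℝ))) := by
  have hk0 : (0:ℝ) < k := by exact_mod_cast hk
  have key : (fun N : ℕ => ((N / k : ℕ) : ℝ) / (N : ℝ))
      =ᶠ[atTop] (fun N : ℕ => (1 - ((N % k : ℕ) : ℝ) / N) / k) := by
    filter_upwards [eventually_ge_atTop 1] with N hN
    have hN0 : (0:ℝ) < N := by exact_mod_cast hN
    have := Nat.div_add_mod N k
    have hcast : (k : ℝ) * ((N / k : ℕ) : ℝ) + ((N % k : ℕ) : ℝ) = (N : ℝ) := by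
      exact_mod_cast this
    field_simp
    nlinarith [hcast]
  have hmod : Tendsto (fun N : ℕ => ((N % k : ℕ) : ℝ) / N) atTop (nhds 0) := by
    apply squeeze_zero (fun N => by positivity) (g := fun N : ℕ => (k : ℝ) / N)
    · intro N
      rcases Nat.eq_zero_or_pos N with rfl | hN
      · simp
      · have h : ((N % k : ℕ) : ℝ) ≤ (k : ℝ) := by
          exact_mod_cast (Nat.mod_lt N (by omega)).le
        gcongr
    · exact tendsto_const_div_atTop_nhds_zero_nat (k : ℝ)
  have : Tendsto (fun N : ℕ => (1 - ((N % k : ℕ) : ℝ) / N) / k) atTop (nhds ((1 - 0) / k)) :=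
    (tendsto_const_nhds.sub hmod).div_const _
  rw [show (1 - 0 : ℝ) / k = 1 / k by ring] at this
  exact this.congr' key.symm

lemma lim_aux (w : ℕ → ℝ) (hw : ∀ d, |w d| ≤ 1) (S : ℕ → ℝ)
    (hSb : ∀ N : ℕ, |S N| ≤ (N : ℝ) ^ 2) (L : ℝ)
    (hS : Tendsto (fun N : ℕ => S N / (N : ℝ) ^ 2) atTop (nhds L)) :
    Tendsto (fun N : ℕ => (∑ d ∈ Finset.Icc 1 N, w d * S (N / d)) / (N : ℝ) ^ 2) atTop
      (nhds (L * ∑' d : ℕ, w d / (d : ℝ) ^ 2)) := by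
  set G : ℕ → ℕ → ℝ := fun N d => if d ∈ Finset.Icc 1 N then w d * S (N / d) / (N : ℝ) ^ 2 else 0
    with hG
  set t : ℕ → ℝ := fun d => L * (w d / (d : ℝ) ^ 2) with ht
  have hGsum : ∀ N : ℕ, ∑' d, G N d = (∑ d ∈ Finset.Icc 1 N, w d * S (N / d)) / (N : ℝ) ^ 2 := by
    intro N
    rw [tsum_eq_sum (s := Finset.Icc 1 N)
      (fun d hd => by simp only [hG]; exact if_neg hd), Finset.sum_div]
    exact Finset.sum_congr rfl fun d hd => by simp only [hG, if_pos hd]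
  have htsum : ∑' d, t d = L * ∑' d : ℕ, w d / (d : ℝ) ^ 2 := tsum_mul_left
  rw [← htsum]
  have := tendsto_tsum_of_dominated_convergence (𝓕 := atTop) (f := fun N d => G N d) (g := t)
    (bound := fun d : ℕ => 1 / (d : ℝ) ^ 2) ((Real.summable_one_div_nat_pow (p := 2)).mpr one_lt_two)
    ?_ ?_
  · exact this.congr (fun N => hGsum N)
  · -- pointwise convergence
    intro k
    rcases Nat.eq_zero_or_pos k with rfl | hk
    · have : ∀ N, G N 0 = 0 := fun N => by simp [hG]
      simp only [this, ht]
      simpa using tendsto_const_nhds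
    · have hev : (fun N : ℕ => G N k) =ᶠ[atTop]
          (fun N : ℕ => w k * ((S (N / k) / ((N / k : ℕ) : ℝ) ^ 2) * (((N / k : ℕ) : ℝ) / N) ^ 2)) := by
        filter_upwards [eventually_ge_atTop k, eventually_ge_atTop 1] with N hN hN1
        have hM : 1 ≤ N / k := (Nat.one_le_div_iff hk).mpr hN
        have hM0 : ((N / k : ℕ) : ℝ) ≠ 0 := by
          have : (1:ℝ) ≤ ((N / k : ℕ) : ℝ) := by exact_mod_cast hM
          linarith
        have hN0 : (N : ℝ) ≠ 0 := by
          have : (1:ℝ) ≤ (N : ℝ) := by exact_mod_cast hN1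
          linarith
        have hmem : k ∈ Finset.Icc 1 N := Finset.mem_Icc.mpr ⟨hk, hN⟩
        simp only [hG, if_pos hmem]
        field_simp <;> ring
      have hdiv : Tendsto (fun N : ℕ => N / k) atTop atTop := by
        apply tendsto_atTop_atTop.mpr
        intro b
        exact ⟨b * k, fun n hn => (Nat.le_div_iff_mul_le hk).mpr hn⟩
      have hA : Tendsto (fun N : ℕ => S (N / k) / ((N / k : ℕ) : ℝ) ^ 2) atTop (nhds L) :=
        hS.comp hdiv
      have hB := (div_floor_tendsto k hk).pow 2
      have := (hA.mul hB).const_mul (w k)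
      rw [show w k * (L * (1 / (k:ℝ)) ^ 2) = t k by simp only [ht]; field_simp <;> ring] at this
      exact Tendsto.congr' hev.symm this
  · -- bound
    filter_upwards with N
    intro d
    rcases Nat.eq_zero_or_pos d with rfl | hd
    · simp [hG]
    by_cases hmem : d ∈ Finset.Icc 1 N
    · simp only [hG, if_pos hmem]
      have hN : 1 ≤ N := le_trans hd (Finset.mem_Icc.mp hmem).2
      have hN0 : (0:ℝ) < (N:ℝ) := by exact_mod_cast hN
      have hd0 : (0:ℝ) < (d:ℝ) := by exact_mod_cast hd
      have hfl : ((N / d : ℕ) : ℝ) ≤ (N : ℝ) / d := Nat.cast_div_le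
      have hfl0 : (0:ℝ) ≤ ((N / d : ℕ) : ℝ) := by positivity
      have h1 : |S (N / d)| ≤ ((N / d : ℕ) : ℝ) ^ 2 := hSb _
      have h2 : |w d * S (N / d) / (N : ℝ) ^ 2| ≤ ((N:ℝ)/d) ^ 2 / (N:ℝ)^2 := by
        rw [abs_div, abs_mul, abs_of_nonneg (le_of_lt (by positivity : (0:ℝ) < (N:ℝ)^2))]
        apply div_le_div_of_nonneg_right ?_ (by positivity)
        calc |w d| * |S (N / d)| ≤ 1 * (((N / d : ℕ) : ℝ) ^ 2) :=
              mul_le_mul (hw d) h1 (abs_nonneg _) zero_le_one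
          _ = ((N / d : ℕ) : ℝ) ^ 2 := one_mul _
          _ ≤ ((N:ℝ)/d) ^ 2 := by apply pow_le_pow_left₀ hfl0 hfl
      rw [Real.norm_eq_abs]
      refine h2.trans (le_of_eq ?_)
      field_simp <;> ring
    · simp only [hG, if_neg hmem, norm_zero]
      positivity

lemma moebius_sum_divisors (n : ℕ) :
    ∑ d ∈ n.divisors, ((μ d : ℤ) : ℝ) = if n = 1 then 1 else 0 := by
  have h := congrArg (fun g : ArithmeticFunction ℤ => g n) moebius_mul_coe_zeta
  simp only [coe_mul_zeta_apply, one_apply] at h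
  exact_mod_cast h

lemma key_identity (f : ℕ → ℝ) (hfmul : ∀ m n, f (m * n) = f m * f n) (N : ℕ) :
    ∑ p ∈ (Finset.Icc 1 N ×ˢ Finset.Icc 1 N).filter (fun p => Nat.gcd p.1 p.2 = 1),
        f (p.1 ^ 2 + p.2 ^ 2)
      = ∑ d ∈ Finset.Icc 1 N, (μ d : ℝ) * f d ^ 2 *
          ∑ m ∈ Finset.Icc 1 (N / d), ∑ n ∈ Finset.Icc 1 (N / d), f (m ^ 2 + n ^ 2) := by
  have hfd : ∀ (d x : ℕ), f (d ^ 2 * x) = f d ^ 2 * f x := by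
    intro d x
    rw [show d ^ 2 * x = d * (d * x) by ring, hfmul, hfmul]
    ring
  -- Step A : RHS as a sigma sum
  have stepA : ∑ d ∈ Finset.Icc 1 N, (μ d : ℝ) * f d ^ 2 *
          ∑ m ∈ Finset.Icc 1 (N / d), ∑ n ∈ Finset.Icc 1 (N / d), f (m ^ 2 + n ^ 2)
      = ∑ x ∈ (Finset.Icc 1 N).sigma
          (fun d => Finset.Icc 1 (N / d) ×ˢ Finset.Icc 1 (N / d)),
          (μ x.1 : ℝ) * f ((x.1 * x.2.1) ^ 2 + (x.1 * x.2.2) ^ 2) := by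
    rw [Finset.sum_sigma]
    refine Finset.sum_congr rfl fun d _ => ?_
    rw [← Finset.sum_product', Finset.mul_sum]
    refine Finset.sum_congr rfl fun p _ => ?_
    rw [show (d * p.1) ^ 2 + (d * p.2) ^ 2 = d ^ 2 * (p.1 ^ 2 + p.2 ^ 2) by ring, hfd]
    ring
  -- Step B : bijection to the other sigma sum
  have stepB : ∑ x ∈ (Finset.Icc 1 N).sigma
          (fun d => Finset.Icc 1 (N / d) ×ˢ Finset.Icc 1 (N / d)),
          (μ x.1 : ℝ) * f ((x.1 * x.2.1) ^ 2 + (x.1 * x.2.2) ^ 2)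
      = ∑ y ∈ (Finset.Icc 1 N ×ˢ Finset.Icc 1 N).sigma
          (fun p => (Nat.gcd p.1 p.2).divisors),
          (μ y.2 : ℝ) * f (y.1.1 ^ 2 + y.1.2 ^ 2) := by
    refine Finset.sum_nbij' (fun x => ⟨(x.1 * x.2.1, x.1 * x.2.2), x.1⟩)
      (fun y => ⟨y.2, (y.1.1 / y.2, y.1.2 / y.2)⟩) ?_ ?_ ?_ ?_ ?_
    · rintro ⟨d, m, n⟩ hx
      simp only [Finset.mem_sigma, Finset.mem_product, Finset.mem_Icc] at hx ⊢
      obtain ⟨⟨hd1, hdN⟩, ⟨hm1, hmN⟩, hn1, hnN⟩ := hx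
      have hd0 : 0 < d := hd1
      refine ⟨⟨⟨?_, ?_⟩, ?_, ?_⟩, ?_⟩
      · exact Nat.one_le_iff_ne_zero.mpr (by positivity)
      · calc d * m = m * d := by ring
          _ ≤ N := (Nat.le_div_iff_mul_le hd0).mp hmN
      · exact Nat.one_le_iff_ne_zero.mpr (by positivity)
      · calc d * n = n * d := by ring
          _ ≤ N := (Nat.le_div_iff_mul_le hd0).mp hnN
      · rw [Nat.mem_divisors]
        refine ⟨Nat.dvd_gcd (dvd_mul_right d m) (dvd_mul_right d n), ?_⟩
        intro hcon
        rw [Nat.gcd_eq_zero_iff] at hcon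
        exact absurd hcon.1 (by positivity)
    · rintro ⟨⟨a, b⟩, d⟩ hy
      simp only [Finset.mem_sigma, Finset.mem_product, Finset.mem_Icc, Nat.mem_divisors] at hy ⊢
      obtain ⟨⟨⟨ha1, haN⟩, hb1, hbN⟩, hdg, hg0⟩ := hy
      have hda : d ∣ a := hdg.trans (Nat.gcd_dvd_left a b)
      have hdb : d ∣ b := hdg.trans (Nat.gcd_dvd_right a b)
      have hd0 : 0 < d := by
        rcases Nat.eq_zero_or_pos d with rfl | h
        · exact absurd (zero_dvd_iff.mp hdg) hg0
        · exact h
      refine ⟨⟨hd0, le_trans (Nat.le_of_dvd ha1 hda) haN⟩, ⟨?_, ?_⟩, ?_, ?_⟩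
      · exact (Nat.one_le_div_iff hd0).mpr (Nat.le_of_dvd ha1 hda)
      · exact Nat.div_le_div_right haN
      · exact (Nat.one_le_div_iff hd0).mpr (Nat.le_of_dvd hb1 hdb)
      · exact Nat.div_le_div_right hbN
    · rintro ⟨d, m, n⟩ hx
      simp only [Finset.mem_sigma, Finset.mem_product, Finset.mem_Icc] at hx
      have hd0 : 0 < d := hx.1.1
      simp [Nat.mul_div_cancel_left _ hd0]
    · rintro ⟨⟨a, b⟩, d⟩ hy
      simp only [Finset.mem_sigma, Finset.mem_product, Finset.mem_Icc, Nat.mem_divisors] at hy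
      obtain ⟨-, hdg, -⟩ := hy
      have hda : d ∣ a := hdg.trans (Nat.gcd_dvd_left a b)
      have hdb : d ∣ b := hdg.trans (Nat.gcd_dvd_right a b)
      simp [Nat.mul_div_cancel' hda, Nat.mul_div_cancel' hdb]
    · rintro ⟨d, m, n⟩ _
      rfl
  -- Step C : collapse the divisor sums
  have stepC : ∑ y ∈ (Finset.Icc 1 N ×ˢ Finset.Icc 1 N).sigma
          (fun p => (Nat.gcd p.1 p.2).divisors),
          (μ y.2 : ℝ) * f (y.1.1 ^ 2 + y.1.2 ^ 2)
      = ∑ p ∈ (Finset.Icc 1 N ×ˢ Finset.Icc 1 N).filter (fun p => Nat.gcd p.1 p.2 = 1),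
          f (p.1 ^ 2 + p.2 ^ 2) := by
    rw [Finset.sum_sigma, Finset.sum_filter]
    refine Finset.sum_congr rfl fun p _ => ?_
    simp only
    rw [← Finset.sum_mul, moebius_sum_divisors]
    split_ifs <;> simp
  rw [stepA, stepB, stepC]
end helpers

theorem stmt5 (f : ℕ → ℝ) (C : ℝ) (hfb : ∀ n, |f n| ≤ C)
    (hf1 : f 1 = 1) (hfmul : ∀ m n, f (m * n) = f m * f n)
    (L : ℝ)
    (hL : Tendsto (fun N : ℕ =>
        (∑ m ∈ Finset.Icc 1 N, ∑ n ∈ Finset.Icc 1 N, f (m ^ 2 + n ^ 2)) / (N : ℝ) ^ 2)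
      atTop (nhds L)) :
    Tendsto (fun N : ℕ =>
        (∑ p ∈ (Finset.Icc 1 N ×ˢ Finset.Icc 1 N).filter (fun p => Nat.gcd p.1 p.2 = 1),
            f (p.1 ^ 2 + p.2 ^ 2)) /
          (((Finset.Icc 1 N ×ˢ Finset.Icc 1 N).filter
              (fun p => Nat.gcd p.1 p.2 = 1)).card : ℝ))
      atTop
      (nhds ((Real.pi ^ 2 / 6) *
        (∏' p : {p : ℕ // p.Prime}, (1 - f p.1 ^ 2 / (p.1 : ℝ) ^ 2)) * L)) := by
  -- |f| ≤ 1
  have hpow : ∀ n k : ℕ, f (n ^ k) = f n ^ k := by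
    intro n k
    induction k with
    | zero => simpa using hf1
    | succ k ih => rw [pow_succ, pow_succ, hfmul, ih]
  have hf_le1 : ∀ n, |f n| ≤ 1 := by
    intro n
    by_contra h
    push_neg at h
    obtain ⟨k, hk⟩ := pow_unbounded_of_one_lt C h
    have h2 := hfb (n ^ k)
    rw [hpow, abs_pow] at h2
    linarith
  set S : ℕ → ℝ := fun N => ∑ m ∈ Finset.Icc 1 N, ∑ n ∈ Finset.Icc 1 N, f (m ^ 2 + n ^ 2)
    with hSdef
  have hSb : ∀ N : ℕ, |S N| ≤ (N : ℝ) ^ 2 := by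
    intro N
    calc |S N| ≤ ∑ m ∈ Finset.Icc 1 N, |∑ n ∈ Finset.Icc 1 N, f (m ^ 2 + n ^ 2)| :=
          Finset.abs_sum_le_sum_abs _ _
      _ ≤ ∑ m ∈ Finset.Icc 1 N, ∑ n ∈ Finset.Icc 1 N, |f (m ^ 2 + n ^ 2)| := by
          exact Finset.sum_le_sum fun m _ => Finset.abs_sum_le_sum_abs _ _
      _ ≤ ∑ m ∈ Finset.Icc 1 N, ∑ n ∈ Finset.Icc 1 N, 1 := by
          exact Finset.sum_le_sum fun m _ => Finset.sum_le_sum fun n _ => hf_le1 _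
      _ = (N : ℝ) ^ 2 := by
          simp only [Finset.sum_const, Nat.card_Icc, Nat.add_sub_cancel, nsmul_eq_mul, mul_one]
          ring
  set T : ℝ := ∏' p : {p : ℕ // p.Prime}, (1 - f p.1 ^ 2 / (p.1 : ℝ) ^ 2) with hT
  set B : ℕ → ℝ := fun N =>
      ∑ p ∈ (Finset.Icc 1 N ×ˢ Finset.Icc 1 N).filter (fun p => Nat.gcd p.1 p.2 = 1),
        f (p.1 ^ 2 + p.2 ^ 2) with hBdef
  set c : ℕ → ℕ := fun N =>
      ((Finset.Icc 1 N ×ˢ Finset.Icc 1 N).filter (fun p => Nat.gcd p.1 p.2 = 1)).card with hcdef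
  -- limit of B N / N ^ 2
  have hEP : ∑' d : ℕ, ((μ d : ℝ) * f d ^ 2) / (d : ℝ) ^ 2 = T := by
    have := EP_aux (fun n => f n ^ 2) (by simp [hf1]) (fun m n => show f (m * n) ^ 2 = f m ^ 2 * f n ^ 2 by rw [hfmul]; ring)
      (fun n => by rw [abs_pow]; exact pow_le_one₀ (abs_nonneg _) (hf_le1 n))
    rw [hT]
    exact this
  have h1 : Tendsto (fun N : ℕ => B N / (N : ℝ) ^ 2) atTop (nhds (L * T)) := by
    have hw : ∀ d, |(μ d : ℝ) * f d ^ 2| ≤ 1 := by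
      intro d
      rw [abs_mul, abs_pow]
      have h1' : |(μ d : ℝ)| ≤ 1 := by exact_mod_cast abs_moebius_le_one (n := d)
      have h2' : |f d| ^ 2 ≤ 1 := pow_le_one₀ (abs_nonneg _) (hf_le1 d)
      nlinarith [abs_nonneg (μ d : ℝ), pow_nonneg (abs_nonneg (f d)) 2]
    have hla := lim_aux (fun d => (μ d : ℝ) * f d ^ 2) hw S hSb L hL
    rw [hEP] at hla
    have : ∀ N : ℕ, (∑ d ∈ Finset.Icc 1 N, ((μ d : ℝ) * f d ^ 2) * S (N / d)) / (N : ℝ) ^ 2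
        = B N / (N : ℝ) ^ 2 := by
      intro N
      rw [hBdef]
      simp only
      rw [key_identity f hfmul N]
    exact (hla.congr this)
  -- limit of c N / N ^ 2
  have h2 : Tendsto (fun N : ℕ => (c N : ℝ) / (N : ℝ) ^ 2) atTop (nhds (6 / π ^ 2)) := by
    set S1 : ℕ → ℝ := fun N => ∑ m ∈ Finset.Icc 1 N, ∑ n ∈ Finset.Icc 1 N,
        (fun _ : ℕ => (1 : ℝ)) (m ^ 2 + n ^ 2) with hS1def
    have hS1val : ∀ N : ℕ, S1 N = (N : ℝ) ^ 2 := by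
      intro N
      simp only [hS1def, Finset.sum_const, Nat.card_Icc, Nat.add_sub_cancel, nsmul_eq_mul,
        mul_one]
      ring
    have hS1b : ∀ N : ℕ, |S1 N| ≤ (N : ℝ) ^ 2 := fun N => by
      rw [hS1val, abs_of_nonneg (by positivity)]
    have hS1lim : Tendsto (fun N : ℕ => S1 N / (N : ℝ) ^ 2) atTop (nhds 1) := by
      apply Tendsto.congr' ?_ (tendsto_const_nhds (x := (1:ℝ)))
      filter_upwards [eventually_ge_atTop 1] with N hN
      have : (0:ℝ) < (N : ℝ) ^ 2 := by
        have : (1:ℝ) ≤ (N:ℝ) := by exact_mod_cast hN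
        positivity
      rw [hS1val, div_self (ne_of_gt this)]
    have hw1 : ∀ d : ℕ, |(μ d : ℝ)| ≤ 1 := fun d => by
      exact_mod_cast abs_moebius_le_one (n := d)
    have hla := lim_aux (fun d => (μ d : ℝ)) hw1 S1 hS1b 1 hS1lim
    rw [zeta_aux, one_mul] at hla
    have : ∀ N : ℕ, (∑ d ∈ Finset.Icc 1 N, (μ d : ℝ) * S1 (N / d)) / (N : ℝ) ^ 2
        = (c N : ℝ) / (N : ℝ) ^ 2 := by
      intro N
      congr 1
      have hk := key_identity (fun _ => (1 : ℝ)) (fun m n => by norm_num) N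
      rw [hcdef]
      simp only
      rw [show ((((Finset.Icc 1 N ×ˢ Finset.Icc 1 N).filter
              (fun p => Nat.gcd p.1 p.2 = 1)).card : ℕ) : ℝ)
            = ∑ p ∈ (Finset.Icc 1 N ×ˢ Finset.Icc 1 N).filter
                (fun p => Nat.gcd p.1 p.2 = 1), (1 : ℝ) by
          rw [Finset.sum_const, nsmul_eq_mul, mul_one], hk]
      refine Finset.sum_congr rfl fun d _ => ?_
      simp only [hS1def]
      norm_num
    exact hla.congr this
  -- combine
  have hπ : (6 : ℝ) / π ^ 2 ≠ 0 := by positivity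
  have h3 := h1.div h2 hπ
  have hval : (L * T) / (6 / π ^ 2) = π ^ 2 / 6 * T * L := by
    field_simp
  rw [hval] at h3
  apply Tendsto.congr' ?_ h3
  filter_upwards [eventually_ge_atTop 1] with N hN
  have hc0 : 0 < c N := by
    rw [hcdef]
    apply Finset.card_pos.mpr
    exact ⟨(1, 1), by simp [Finset.mem_filter, Finset.mem_product, Finset.mem_Icc, hN]⟩
  have hcR : ((c N : ℕ) : ℝ) ≠ 0 := by exact_mod_cast hc0.ne'
  have hNR : ((N : ℝ)) ^ 2 ≠ 0 := by
    have : (1:ℝ) ≤ (N:ℝ) := by exact_mod_cast hN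
    positivity
  show B N / (N:ℝ)^2 / ((c N : ℝ) / (N:ℝ)^2) = B N / (c N : ℝ)
  field_simp
end

section
/- Let (X,T) be a uniquely ergodic topological dynamical system with unique invariant Borel probability measure μ, and assume (as is known) that for every x ∈ X and every continuous f : X → ℝ, lim_{N→∞} 𝔼_{1≤m,n≤N} f(T^{Ω(m²+n²)} x) = ∫_X f dμ. Then for every x ∈ X and every continuous f : X → ℝ, lim_{N→∞} 𝔼_{1≤m,n≤N, gcd(m,n)=1} f(T^{Ω(m²+n²)} x) = ∫_X f dμ. -/
open Filter Finset Real MeasureTheory ArithmeticFunction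

-- reindexing multiples
lemma aux_sum_mult {M : Type*} [AddCommMonoid M] (d N : ℕ) (hd : 1 ≤ d) (h : ℕ → M) :
    ∑ m ∈ Finset.Icc 1 N, (if d ∣ m then h m else 0) = ∑ a ∈ Finset.Icc 1 (N / d), h (d * a) := by
  rw [← Finset.sum_filter]
  apply Finset.sum_nbij' (i := fun m => m / d) (j := fun a => d * a)
  · intro m hm
    simp only [Finset.mem_filter, Finset.mem_Icc] at hm
    obtain ⟨⟨h1, h2⟩, hdvd⟩ := hm
    simp only [Finset.mem_Icc]
    constructor
    · rw [Nat.one_le_div_iff hd]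
      exact Nat.le_of_dvd h1 hdvd
    · exact Nat.div_le_div_right h2
  · intro a ha
    simp only [Finset.mem_Icc] at ha
    simp only [Finset.mem_filter, Finset.mem_Icc]
    refine ⟨⟨Nat.mul_pos hd ha.1, ?_⟩, Dvd.intro a rfl⟩
    calc d * a ≤ d * (N / d) := Nat.mul_le_mul_left d ha.2
    _ ≤ N := Nat.mul_div_le N d
  · intro m hm
    simp only [Finset.mem_filter] at hm
    exact Nat.mul_div_cancel' hm.2
  · intro a _
    exact Nat.mul_div_cancel_left a hd
  · intro m hm
    rw [Nat.mul_div_cancel' (Finset.mem_filter.1 hm).2]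

-- sum of moebius over divisors
lemma aux_moebius_sum (n : ℕ) :
    ∑ d ∈ n.divisors, ((moebius d : ℤ) : ℝ) = if n = 1 then 1 else 0 := by
  have := (ArithmeticFunction.coe_mul_zeta_apply
    (f := ((moebius : ArithmeticFunction ℤ) : ArithmeticFunction ℝ)) (x := n)).symm
  rw [ArithmeticFunction.coe_moebius_mul_coe_zeta, ArithmeticFunction.one_apply] at this
  simpa using this

lemma aux_moebius_identity (g : ℕ → ℕ → ℝ) (N : ℕ) :
    ∑ p ∈ (Finset.Icc 1 N ×ˢ Finset.Icc 1 N).filter (fun p => Nat.gcd p.1 p.2 = 1), g p.1 p.2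
      = ∑ d ∈ Finset.Icc 1 N, ((moebius d : ℤ) : ℝ) *
          ∑ a ∈ Finset.Icc 1 (N / d), ∑ b ∈ Finset.Icc 1 (N / d), g (d * a) (d * b) := by
  rw [Finset.sum_filter, Finset.sum_product]
  have step1 : ∀ m ∈ Finset.Icc 1 N, ∀ n ∈ Finset.Icc 1 N,
      (if Nat.gcd m n = 1 then g m n else 0)
        = ∑ d ∈ Finset.Icc 1 N, (if d ∣ m ∧ d ∣ n then ((moebius d : ℤ) : ℝ) * g m n else 0) := by
    intro m hm n hn
    simp only [Finset.mem_Icc] at hm hn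
    have hset : (Finset.Icc 1 N).filter (fun d => d ∣ m ∧ d ∣ n) = (Nat.gcd m n).divisors := by
      ext d
      simp only [Finset.mem_filter, Finset.mem_Icc, Nat.mem_divisors, Nat.dvd_gcd_iff]
      constructor
      · rintro ⟨_, h2⟩
        exact ⟨h2, Nat.gcd_ne_zero_left (by omega)⟩
      · rintro ⟨⟨h1, h2⟩, _⟩
        have hd1 : 1 ≤ d := Nat.one_le_iff_ne_zero.2 (by rintro rfl; omega)
        exact ⟨⟨hd1, le_trans (Nat.le_of_dvd (by omega) h1) hm.2⟩, h1, h2⟩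
    calc (if Nat.gcd m n = 1 then g m n else 0)
        = (∑ d ∈ (Nat.gcd m n).divisors, ((moebius d : ℤ) : ℝ)) * g m n := by
          rw [aux_moebius_sum]
          by_cases h : Nat.gcd m n = 1 <;> simp [h]
      _ = (∑ d ∈ Finset.Icc 1 N, if d ∣ m ∧ d ∣ n then ((moebius d : ℤ) : ℝ) else 0) * g m n := by
          rw [← hset, Finset.sum_filter]
      _ = _ := by
          rw [Finset.sum_mul]
          refine Finset.sum_congr rfl fun d _ => ?_
          by_cases h : d ∣ m ∧ d ∣ n <;> simp [h]
  rw [Finset.sum_congr rfl (fun m hm => Finset.sum_congr rfl (fun n hn => step1 m hm n hn))]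
  rw [Finset.sum_congr rfl (fun m _ => Finset.sum_comm), Finset.sum_comm]
  refine Finset.sum_congr rfl fun d hd => ?_
  have hd1 : 1 ≤ d := (Finset.mem_Icc.1 hd).1
  have inner : ∀ m ∈ Finset.Icc 1 N,
      ∑ n ∈ Finset.Icc 1 N, (if d ∣ m ∧ d ∣ n then ((moebius d : ℤ) : ℝ) * g m n else 0)
        = if d ∣ m then ∑ b ∈ Finset.Icc 1 (N / d), ((moebius d : ℤ) : ℝ) * g m (d * b) else 0 := by
    intro m _
    by_cases h : d ∣ m
    · simp only [h, true_and, if_true]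
      exact aux_sum_mult d N hd1 (fun n => ((moebius d : ℤ) : ℝ) * g m n)
    · simp [h]
  rw [Finset.sum_congr rfl inner, aux_sum_mult d N hd1, Finset.mul_sum]
  refine Finset.sum_congr rfl fun a _ => ?_
  rw [Finset.mul_sum]

lemma aux_natdiv_atTop (d : ℕ) (hd : 1 ≤ d) : Tendsto (fun N : ℕ => N / d) atTop atTop := by
  apply tendsto_atTop_atTop.2
  intro b
  exact ⟨d * b, fun n hn => (Nat.le_div_iff_mul_le hd).2 (by rw [Nat.mul_comm]; exact hn)⟩

lemma aux_div_tendsto (d : ℕ) (hd : 1 ≤ d) :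
    Tendsto (fun N : ℕ => ((N / d : ℕ) : ℝ) / (N : ℝ)) atTop (nhds (1 / (d : ℝ))) := by
  have hd0 : (0:ℝ) < d := by exact_mod_cast hd
  have lower : Tendsto (fun N : ℕ => 1 / (d:ℝ) - 1 / (N:ℝ)) atTop (nhds (1 / (d:ℝ))) := by
    have := tendsto_one_div_atTop_nhds_zero_nat (𝕜 := ℝ)
    simpa using tendsto_const_nhds.sub this
  apply tendsto_of_tendsto_of_tendsto_of_le_of_le' lower tendsto_const_nhds
  · filter_upwards [eventually_ge_atTop 1] with N hN
    have hN0 : (0:ℝ) < N := by exact_mod_cast hN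
    have h1 : (N:ℝ) < d * ((N / d : ℕ) + 1) := by
      have e1 := Nat.div_add_mod N d
      have e2 := Nat.mod_lt N hd
      have : N < d * (N / d + 1) := by
        rw [Nat.mul_add, Nat.mul_one]; omega
      exact_mod_cast this
    rw [div_sub_div _ _ (ne_of_gt hd0) (ne_of_gt hN0), div_le_div_iff₀ (by positivity) hN0]
    nlinarith
  · filter_upwards [eventually_ge_atTop 1] with N hN
    have hN0 : (0:ℝ) < N := by exact_mod_cast hN
    have h2 : (d:ℝ) * ((N / d : ℕ) : ℝ) ≤ N := by
      exact_mod_cast Nat.mul_div_le N d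
    rw [div_le_div_iff₀ hN0 hd0]
    nlinarith

lemma aux_key (u : ℕ → ℕ → ℝ) (L C : ℝ) (hC : 0 ≤ C)
    (hu0 : ∀ d, u d 0 = 0)
    (hb : ∀ d M, |u d M| ≤ C * (M : ℝ) ^ 2)
    (hl : ∀ d, Tendsto (fun M : ℕ => u d M / (M : ℝ) ^ 2) atTop (nhds L)) :
    Tendsto (fun N : ℕ => (∑ d ∈ Finset.Icc 1 N, ((moebius d : ℤ) : ℝ) * u d (N / d)) / (N : ℝ) ^ 2)
      atTop (nhds (L * ∑' d : ℕ, ((moebius d : ℤ) : ℝ) / (d : ℝ) ^ 2)) := by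
  set F : ℕ → ℕ → ℝ := fun N d => ((moebius d : ℤ) : ℝ) * u d (N / d) / (N : ℝ) ^ 2 with hF
  have hFsum : ∀ N : ℕ, (∑ d ∈ Finset.Icc 1 N, ((moebius d : ℤ) : ℝ) * u d (N / d)) / (N : ℝ) ^ 2
      = ∑' d : ℕ, F N d := by
    intro N
    rw [Finset.sum_div]
    symm
    apply tsum_eq_sum
    intro d hd
    simp only [Finset.mem_Icc, not_and_or, not_le] at hd
    rcases hd with hd | hd
    · interval_cases d
      simp [hF]
    · have : N / d = 0 := Nat.div_eq_of_lt hd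
      simp [hF, this, hu0]
  have hgoal : Tendsto (fun N : ℕ => ∑' d : ℕ, F N d) atTop
      (nhds (∑' d : ℕ, ((moebius d : ℤ) : ℝ) * L / (d : ℝ) ^ 2)) := by
    apply tendsto_tsum_of_dominated_convergence (bound := fun d : ℕ => C / (d : ℝ) ^ 2)
    · have h2 : Summable (fun d : ℕ => 1 / (d : ℝ) ^ 2) :=
        Real.summable_one_div_nat_pow.2 one_lt_two
      simpa [mul_one_div, div_eq_mul_inv] using h2.mul_left C
    · intro d
      rcases Nat.eq_zero_or_pos d with rfl | hd
      · simpa [hF] using tendsto_const_nhds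
      have hd1 : 1 ≤ d := hd
      have t1 : Tendsto (fun N : ℕ => u d (N / d) / (((N / d : ℕ) : ℝ)) ^ 2) atTop (nhds L) :=
        (hl d).comp (aux_natdiv_atTop d hd1)
      have t2 : Tendsto (fun N : ℕ => (((N / d : ℕ) : ℝ) / (N : ℝ)) ^ 2) atTop
          (nhds ((1 / (d : ℝ)) ^ 2)) := (aux_div_tendsto d hd1).pow 2
      have t3 : Tendsto (fun N : ℕ =>
          ((moebius d : ℤ) : ℝ) * (u d (N / d) / (((N / d : ℕ) : ℝ)) ^ 2)
            * ((((N / d : ℕ) : ℝ) / (N : ℝ)) ^ 2)) atTop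
          (nhds (((moebius d : ℤ) : ℝ) * L * (1 / (d : ℝ)) ^ 2)) :=
        (tendsto_const_nhds.mul t1).mul t2
      have heq : ((moebius d : ℤ) : ℝ) * L * (1 / (d : ℝ)) ^ 2
          = ((moebius d : ℤ) : ℝ) * L / (d : ℝ) ^ 2 := by
        rw [one_div, inv_pow]; ring
      rw [heq] at t3
      apply t3.congr'
      filter_upwards [eventually_ge_atTop d] with N hN
      have hm1 : 1 ≤ N / d := (Nat.one_le_div_iff hd1).2 hN
      have hm0 : (0:ℝ) < ((N / d : ℕ) : ℝ) := by exact_mod_cast hm1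
      have hN0 : (0:ℝ) < (N : ℝ) := by
        have : 1 ≤ N := le_trans hd1 hN
        exact_mod_cast this
      simp only [hF]
      field_simp
    · filter_upwards [eventually_ge_atTop 1] with N hN d
      rcases Nat.eq_zero_or_pos d with rfl | hd
      · simp [hF]
      have hd0 : (0:ℝ) < (d : ℝ) := by exact_mod_cast hd
      have hN0 : (0:ℝ) < (N : ℝ) := by exact_mod_cast hN
      have hmd : ((N / d : ℕ) : ℝ) * (d : ℝ) ≤ (N : ℝ) := by
        exact_mod_cast Nat.div_mul_le_self N d
      have hm0 : (0:ℝ) ≤ ((N / d : ℕ) : ℝ) := by positivity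
      have hmu : |((moebius d : ℤ) : ℝ)| ≤ 1 := by
        have := ArithmeticFunction.abs_moebius_le_one (n := d)
        exact_mod_cast (abs_le.2 ⟨by exact_mod_cast (abs_le.1 this).1,
          by exact_mod_cast (abs_le.1 this).2⟩)
      have hub : |u d (N / d)| ≤ C * ((N / d : ℕ) : ℝ) ^ 2 := hb d (N / d)
      have hsq : (((N / d : ℕ) : ℝ) * (d:ℝ)) * (((N / d : ℕ) : ℝ) * (d:ℝ)) ≤ (N:ℝ) * (N:ℝ) :=
        mul_self_le_mul_self (mul_nonneg hm0 hd0.le) hmd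
      have key : |((moebius d : ℤ) : ℝ)| * |u d (N / d)| / (N : ℝ) ^ 2 ≤ C / (d : ℝ) ^ 2 := by
        rw [div_le_div_iff₀ (by positivity) (by positivity)]
        have h1 : |((moebius d : ℤ) : ℝ)| * |u d (N / d)| ≤ C * ((N / d : ℕ) : ℝ) ^ 2 := by
          calc |((moebius d : ℤ) : ℝ)| * |u d (N / d)| ≤ 1 * (C * ((N / d : ℕ) : ℝ) ^ 2) :=
                mul_le_mul hmu hub (abs_nonneg _) zero_le_one
            _ = C * ((N / d : ℕ) : ℝ) ^ 2 := one_mul _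
        nlinarith [mul_le_mul_of_nonneg_right h1 (sq_nonneg (d:ℝ)), hC,
          mul_nonneg hC (mul_nonneg (mul_nonneg hm0 hm0) (mul_nonneg hd0.le hd0.le))]
      have hnorm : ‖F N d‖ = |((moebius d : ℤ) : ℝ)| * |u d (N / d)| / (N : ℝ) ^ 2 := by
        rw [hF]
        rw [Real.norm_eq_abs, abs_div, abs_mul, abs_of_pos (by positivity : (0:ℝ) < (N:ℝ)^2)]
      rw [hnorm]
      exact key
  have hrw : (∑' d : ℕ, ((moebius d : ℤ) : ℝ) * L / (d : ℝ) ^ 2)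
      = L * ∑' d : ℕ, ((moebius d : ℤ) : ℝ) / (d : ℝ) ^ 2 := by
    rw [← tsum_mul_left]
    exact tsum_congr fun d => by ring
  rw [hrw] at hgoal
  exact Tendsto.congr (fun N => (hFsum N).symm) hgoal

lemma aux_abs_mu (d : ℕ) : |((moebius d : ℤ) : ℝ)| ≤ 1 := by
  rw [← Int.cast_abs]
  exact_mod_cast ArithmeticFunction.abs_moebius_le_one (n := d)

lemma aux_summable_moebius : Summable (fun d : ℕ => ((moebius d : ℤ) : ℝ) / (d : ℝ) ^ 2) := by
  apply Summable.of_norm_bounded (g := fun d : ℕ => 1 / (d : ℝ) ^ 2)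
    (Real.summable_one_div_nat_pow.2 one_lt_two)
  intro d
  rcases Nat.eq_zero_or_pos d with rfl | hd
  · simp
  have hd0 : (0:ℝ) < (d:ℝ) := by exact_mod_cast hd
  rw [Real.norm_eq_abs, abs_div, abs_of_nonneg (by positivity : (0:ℝ) ≤ (d:ℝ)^2),
    div_le_div_iff₀ (by positivity) (by positivity)]
  nlinarith [aux_abs_mu d, sq_nonneg (d:ℝ)]

set_option maxHeartbeats 1000000 in
lemma aux_kappa_ge : (1:ℝ)/4 ≤ ∑' d : ℕ, ((moebius d : ℤ) : ℝ) / (d : ℝ) ^ 2 := by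
  set h : ℕ → ℝ := fun d => ((moebius d : ℤ) : ℝ) / (d : ℝ) ^ 2 with hh
  have hsum : Summable h := aux_summable_moebius
  have e0 : ∑' d, h d = h 0 + ∑' n, h (n + 1) := Summable.tsum_eq_zero_add hsum
  have hs1 : Summable (fun n => h (n + 1)) := (summable_nat_add_iff 1).2 hsum
  have e1 : ∑' n, h (n + 1) = h 1 + ∑' n, h (n + 2) := Summable.tsum_eq_zero_add hs1
  have hs2 : Summable (fun n => h (n + 2)) := (summable_nat_add_iff 2).2 hsum
  have e2 : ∑' n, h (n + 2) = h 2 + ∑' n, h (n + 3) := Summable.tsum_eq_zero_add hs2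
  have hs3 : Summable (fun n => h (n + 3)) := (summable_nat_add_iff 3).2 hsum
  have hb : ∀ n : ℕ, ‖h (n + 3)‖ ≤ 1 / ((n : ℝ) + 3) ^ 2 := by
    intro n
    have hc : ((n + 3 : ℕ) : ℝ) = (n : ℝ) + 3 := by push_cast; ring
    rw [hh]
    simp only [Real.norm_eq_abs, abs_div, hc]
    rw [abs_of_nonneg (by positivity : (0:ℝ) ≤ ((n:ℝ)+3)^2),
      div_le_div_iff₀ (by positivity) (by positivity)]
    nlinarith [aux_abs_mu (n + 3), sq_nonneg ((n:ℝ)+3)]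
  have hbsum : Summable (fun n : ℕ => 1 / ((n : ℝ) + 3) ^ 2) := by
    have h0 : Summable (fun n : ℕ => 1 / (n : ℝ) ^ 2) :=
      Real.summable_one_div_nat_pow.2 one_lt_two
    refine ((summable_nat_add_iff 3).2 h0).congr fun n => ?_
    push_cast
    ring
  have hns : Summable (fun n => ‖h (n + 3)‖) := by
    simpa [Real.norm_eq_abs] using hs3.abs
  have htail : |∑' n, h (n + 3)| ≤ 1/2 := by
    have h1 : |∑' n, h (n + 3)| ≤ ∑' n : ℕ, 1 / ((n : ℝ) + 3) ^ 2 := by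
      calc |∑' n, h (n + 3)| = ‖∑' n, h (n + 3)‖ := (Real.norm_eq_abs _).symm
        _ ≤ ∑' n, ‖h (n + 3)‖ := norm_tsum_le_tsum_norm hns
        _ ≤ ∑' n : ℕ, 1 / ((n : ℝ) + 3) ^ 2 := Summable.tsum_le_tsum hb hns hbsum
    have key : ∀ m : ℕ, ∑ i ∈ Finset.range m, 1 / ((i : ℝ) + 3) ^ 2 ≤ 1/2 - 1/((m:ℝ)+2) := by
      intro m
      induction m with
      | zero => norm_num
      | succ k ih =>
        rw [Finset.sum_range_succ]
        have hk2 : (0:ℝ) < (k:ℝ) + 2 := by positivity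
        have hk3 : (0:ℝ) < (k:ℝ) + 3 := by positivity
        have step : 1 / ((k : ℝ) + 3) ^ 2 ≤ 1/((k:ℝ)+2) - 1/((k:ℝ)+3) := by
          rw [div_sub_div _ _ (ne_of_gt hk2) (ne_of_gt hk3),
            div_le_div_iff₀ (by positivity) (by positivity)]
          nlinarith
        have hcast : ((k + 1 : ℕ) : ℝ) = (k : ℝ) + 1 := by push_cast; ring
        rw [hcast]
        have : (1:ℝ)/((k:ℝ)+1+2) = 1/((k:ℝ)+3) := by norm_num; ring_nf
        linarith [this.le, this.ge]
    have h2 : ∑' n : ℕ, 1 / ((n : ℝ) + 3) ^ 2 ≤ 1/2 := by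
      apply Real.tsum_le_of_sum_range_le (fun n => by positivity)
      intro n
      refine (key n).trans ?_
      have : (0:ℝ) ≤ 1/((n:ℝ)+2) := by positivity
      linarith
    linarith [abs_nonneg (∑' n, h (n + 3))]
  have h0 : h 0 = 0 := by simp [hh]
  have h1v : h 1 = 1 := by simp [hh]
  have h2v : h 2 = -(1/4) := by
    rw [hh]
    simp only
    rw [ArithmeticFunction.moebius_apply_prime Nat.prime_two]
    norm_num
  rw [e0, e1, e2, h0, h1v, h2v]
  have := abs_le.1 htail
  linarith [this.1]


theorem stmt8 {X : Type*} [MetricSpace X] [CompactSpace X]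
    [MeasurableSpace X] [BorelSpace X]
    (T : X → X) (hT : IsHomeomorph T)
    (mu : Measure X) [IsProbabilityMeasure mu]
    (hinv : MeasurePreserving T mu mu)
    (huniq : ∀ ν : Measure X, IsProbabilityMeasure ν → MeasurePreserving T ν ν → ν = mu)
    (hknown : ∀ (x : X) (f : X → ℝ), Continuous f →
      Tendsto (fun N : ℕ =>
          (∑ m ∈ Finset.Icc 1 N, ∑ n ∈ Finset.Icc 1 N,
            f (T^[cardFactors (m ^ 2 + n ^ 2)] x)) / (N : ℝ) ^ 2)
        atTop (nhds (∫ y, f y ∂mu)))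
    (x : X) (f : X → ℝ) (hf : Continuous f) :
    Tendsto (fun N : ℕ =>
        (∑ p ∈ (Finset.Icc 1 N ×ˢ Finset.Icc 1 N).filter (fun p => Nat.gcd p.1 p.2 = 1),
            f (T^[cardFactors (p.1 ^ 2 + p.2 ^ 2)] x)) /
          (((Finset.Icc 1 N ×ˢ Finset.Icc 1 N).filter
              (fun p => Nat.gcd p.1 p.2 = 1)).card : ℝ))
      atTop (nhds (∫ y, f y ∂mu)) := by
  haveI : NeZero mu := ⟨IsProbabilityMeasure.ne_zero mu⟩
  haveI : Nonempty X := by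
    by_contra h
    rw [not_nonempty_iff] at h
    have h1 : mu Set.univ = 1 := measure_univ
    rw [Set.eq_empty_of_isEmpty (Set.univ : Set X)] at h1
    simp at h1
  obtain ⟨z, -, hz⟩ := IsCompact.exists_isMaxOn isCompact_univ Set.univ_nonempty
    (hf.abs.continuousOn)
  set C : ℝ := |f z| with hCdef
  have hC : ∀ y, |f y| ≤ C := fun y => hz (Set.mem_univ y)
  have hC0 : (0:ℝ) ≤ C := abs_nonneg _
  set I : ℝ := ∫ y, f y ∂mu with hI
  set κ : ℝ := ∑' d : ℕ, ((moebius d : ℤ) : ℝ) / (d : ℝ) ^ 2 with hκ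
  have hκpos : (0:ℝ) < κ := lt_of_lt_of_le (by norm_num) aux_kappa_ge
  set u : ℕ → ℕ → ℝ := fun d M => ∑ a ∈ Finset.Icc 1 M, ∑ b ∈ Finset.Icc 1 M,
      f (T^[cardFactors (a ^ 2 + b ^ 2)] (T^[2 * cardFactors d] x)) with hu
  -- the coprime sum, by Möbius inversion
  have hA : ∀ N : ℕ,
      ∑ p ∈ (Finset.Icc 1 N ×ˢ Finset.Icc 1 N).filter (fun p => Nat.gcd p.1 p.2 = 1),
          f (T^[cardFactors (p.1 ^ 2 + p.2 ^ 2)] x)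
        = ∑ d ∈ Finset.Icc 1 N, ((moebius d : ℤ) : ℝ) * u d (N / d) := by
    intro N
    have base := aux_moebius_identity (fun m n => f (T^[cardFactors (m ^ 2 + n ^ 2)] x)) N
    refine base.trans ?_
    refine Finset.sum_congr rfl fun d hd => ?_
    have hd1 : 1 ≤ d := (Finset.mem_Icc.1 hd).1
    congr 1
    refine Finset.sum_congr rfl fun a ha => Finset.sum_congr rfl fun b hb => ?_
    have ha1 : 1 ≤ a := (Finset.mem_Icc.1 ha).1
    have hb1 : 1 ≤ b := (Finset.mem_Icc.1 hb).1
    have hs : (d * a) ^ 2 + (d * b) ^ 2 = d ^ 2 * (a ^ 2 + b ^ 2) := by ring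
    have hsne : a ^ 2 + b ^ 2 ≠ 0 := by positivity
    have hdne : d ≠ 0 := by omega
    have hΩ : cardFactors ((d * a) ^ 2 + (d * b) ^ 2)
        = cardFactors (a ^ 2 + b ^ 2) + 2 * cardFactors d := by
      rw [hs, ArithmeticFunction.cardFactors_mul (pow_ne_zero 2 hdne) hsne, sq,
        ArithmeticFunction.cardFactors_mul hdne hdne]
      ring
    rw [hΩ, Function.iterate_add_apply]
  have hulim : ∀ d : ℕ, Tendsto (fun M : ℕ => u d M / (M : ℝ) ^ 2) atTop (nhds I) :=
    fun d => hknown (T^[2 * cardFactors d] x) f hf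
  have hu0 : ∀ d, u d 0 = 0 := by intro d; simp [hu]
  have hub : ∀ d M, |u d M| ≤ C * (M : ℝ) ^ 2 := by
    intro d M
    have h1 : |u d M| ≤ ∑ a ∈ Finset.Icc 1 M, ∑ b ∈ Finset.Icc 1 M, C := by
      rw [hu]
      refine (Finset.abs_sum_le_sum_abs _ _).trans (Finset.sum_le_sum fun a _ => ?_)
      exact (Finset.abs_sum_le_sum_abs _ _).trans (Finset.sum_le_sum fun b _ => hC _)
    refine h1.trans ?_
    rw [Finset.sum_const, Finset.sum_const, Nat.card_Icc]
    simp only [smul_eq_mul, Nat.add_sub_cancel]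
    push_cast
    exact le_of_eq (by ring)
  have hAlim : Tendsto (fun N : ℕ =>
      (∑ p ∈ (Finset.Icc 1 N ×ˢ Finset.Icc 1 N).filter (fun p => Nat.gcd p.1 p.2 = 1),
          f (T^[cardFactors (p.1 ^ 2 + p.2 ^ 2)] x)) / (N : ℝ) ^ 2) atTop (nhds (I * κ)) := by
    have := aux_key u I C hC0 hu0 hub hulim
    apply this.congr
    intro N
    rw [hA N]
  -- the cardinality, by Möbius inversion
  have hcard : ∀ N : ℕ,
      ((((Finset.Icc 1 N ×ˢ Finset.Icc 1 N).filter (fun p => Nat.gcd p.1 p.2 = 1)).card : ℝ))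
        = ∑ d ∈ Finset.Icc 1 N, ((moebius d : ℤ) : ℝ) * ((N / d : ℕ) : ℝ) ^ 2 := by
    intro N
    have base := aux_moebius_identity (fun _ _ => (1:ℝ)) N
    calc ((((Finset.Icc 1 N ×ˢ Finset.Icc 1 N).filter (fun p => Nat.gcd p.1 p.2 = 1)).card : ℝ))
        = ∑ p ∈ (Finset.Icc 1 N ×ˢ Finset.Icc 1 N).filter (fun p => Nat.gcd p.1 p.2 = 1),
            (1:ℝ) := by rw [Finset.sum_const, nsmul_eq_mul, mul_one]
      _ = ∑ d ∈ Finset.Icc 1 N, ((moebius d : ℤ) : ℝ) *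
            ∑ a ∈ Finset.Icc 1 (N / d), ∑ b ∈ Finset.Icc 1 (N / d), (1:ℝ) := base
      _ = ∑ d ∈ Finset.Icc 1 N, ((moebius d : ℤ) : ℝ) * ((N / d : ℕ) : ℝ) ^ 2 := by
          refine Finset.sum_congr rfl fun d _ => ?_
          congr 1
          rw [Finset.sum_const, Finset.sum_const, Nat.card_Icc]
          simp only [smul_eq_mul, Nat.add_sub_cancel, mul_one]
          push_cast
          ring
  have hclim : Tendsto (fun N : ℕ =>
      ((((Finset.Icc 1 N ×ˢ Finset.Icc 1 N).filter (fun p => Nat.gcd p.1 p.2 = 1)).card : ℝ))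
        / (N : ℝ) ^ 2) atTop (nhds (1 * κ)) := by
    have := aux_key (fun _ M => ((M : ℕ) : ℝ) ^ 2) 1 1 zero_le_one
      (by intro d; simp)
      (by intro d M; rw [abs_of_nonneg (by positivity)]; rw [one_mul])
      (by
        intro d
        apply Tendsto.congr' ?_ (tendsto_const_nhds (x := (1:ℝ)))
        filter_upwards [eventually_ge_atTop 1] with M hM
        have hM0 : (0:ℝ) < (M:ℝ) := by exact_mod_cast hM
        field_simp)
    apply this.congr
    intro N
    rw [hcard N]
  -- conclusion
  have hκne : (1:ℝ) * κ ≠ 0 := by positivity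
  have hdiv := hAlim.div hclim hκne
  have hlimeq : I * κ / (1 * κ) = I := by field_simp
  rw [hlimeq] at hdiv
  apply hdiv.congr'
  filter_upwards [eventually_ge_atTop 1] with N hN
  have hmem : ((1:ℕ), (1:ℕ)) ∈ (Finset.Icc 1 N ×ˢ Finset.Icc 1 N).filter
      (fun p => Nat.gcd p.1 p.2 = 1) := by
    simp [Finset.mem_filter, Finset.mem_product, Finset.mem_Icc, hN]
  have hcpos : 0 < ((Finset.Icc 1 N ×ˢ Finset.Icc 1 N).filter
      (fun p => Nat.gcd p.1 p.2 = 1)).card := Finset.card_pos.2 ⟨_, hmem⟩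
  have hc0 : (0:ℝ) < (((Finset.Icc 1 N ×ˢ Finset.Icc 1 N).filter
      (fun p => Nat.gcd p.1 p.2 = 1)).card : ℝ) := by exact_mod_cast hcpos
  have hN0 : (0:ℝ) < (N:ℝ) := by exact_mod_cast hN
  simp only [Pi.div_apply]
  field_simp
end
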